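/- Let A : Fin n → ℕ be a monotone (sorted nondecreasing) sequence with all values less than u, and let h = ⌊log2(n/3)⌋ with n ≥ 3. Define hi(x) = x / 2^(log2 u − h) (the top h bits, where u ≤ 2^(log2 u)). Then the unary-difference encoding of hi(A(⌈2n/3⌉)), hi(A(⌈2n/3⌉+1)), …, hi(A(n−1)), consisting of hi(A(⌈2n/3⌉)) zeros, a one, and then for each subsequent index i the quantity hi(A(i)) − hi(A(i−1)) zeros followed by a one, has total length at most n/3 + n/3: exactly ⌈n/3⌉ ones (one per encoded element) and at most hi(A(n−1)) ≤ n/3 zeros in total. -/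

import Mathlib

/-- Telescoping sum of truncated differences for a monotone function. -/
lemma telescope_mono (g : ℕ → ℕ) (hg : Monotone g) (s : ℕ) :
    ∀ m, s ≤ m → g s + ∑ i ∈ Finset.Ico (s + 1) (m + 1), (g i - g (i - 1)) = g m := by
  intro m hm
  induction m, hm using Nat.le_induction with
  | base => simp
  | succ m hm ih =>
      rw [Finset.sum_Ico_succ_top (by omega), ← Nat.add_assoc, ih]
      simp only [Nat.add_sub_cancel]
      have := hg (Nat.le_succ m)
      simp only [Nat.succ_eq_add_one] at this
      omega

/-- The unary-difference encoding of the high parts of the last third of a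
sorted array: the zero counts telescope to `hi (A (n-1))`, which is at most
`n/3`, and there is one `1` per encoded element. -/
theorem stmt_1 (n u L : ℕ) (hn : 3 ≤ n) (hu : u ≤ 2 ^ L)
    (hL : Nat.log 2 (n / 3) ≤ L)
    (A : ℕ → ℕ) (hmono : Monotone A) (hlt : ∀ i < n, A i < u) :
    ∀ h hi s, h = Nat.log 2 (n / 3) → hi = (fun x : ℕ => x / 2 ^ (L - h)) →
      s = n - n / 3 →
      -- total number of zeros in the stream telescopes:
      hi (A s) + ∑ i ∈ Finset.Ico (s + 1) n, (hi (A i) - hi (A (i - 1)))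
          = hi (A (n - 1)) ∧
      -- and is at most n/3:
      hi (A (n - 1)) ≤ n / 3 ∧
      -- number of ones, one per encoded element:
      n - s = n / 3 := by
  intro h hi s hh hhi hs
  have hdiv : 1 ≤ n / 3 := Nat.one_le_div_iff (by norm_num) |>.mpr hn
  have hsn : s + 1 ≤ n := by
    have : n / 3 ≤ n := Nat.div_le_self n 3
    omega
  have hgmono : Monotone (fun i => hi (A i)) := by
    subst hhi
    exact fun a b hab => Nat.div_le_div_right (hmono hab)
  constructor
  · have := telescope_mono (fun i => hi (A i)) hgmono s (n - 1) (by omega)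
    have hn1 : n - 1 + 1 = n := by omega
    rw [hn1] at this
    exact this
  constructor
  · have hAlt : A (n - 1) < 2 ^ L := lt_of_lt_of_le (hlt (n - 1) (by omega)) hu
    have hhle : h ≤ L := hh ▸ hL
    have : hi (A (n - 1)) < 2 ^ h := by
      subst hhi
      rw [Nat.div_lt_iff_lt_mul (by positivity : 0 < 2 ^ (L - h)), ← pow_add]
      rwa [Nat.add_sub_cancel' hhle]
    have h2 : 2 ^ h ≤ n / 3 := hh ▸ Nat.pow_log_le_self 2 (by omega)
    omega
  · omega
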